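/- For a smooth curve A(r) of matrices with A(0) = Id, the third-order coefficient of √(det A(r)) is D₃ = (1/12)[tr A''' - 3⟨A', A''⟩ + 2 tr((A')³) + (3/2)(tr A')(tr A'') - (3/2)(tr A')tr((A')²) + (1/4)(tr A')³], where derivatives are at r = 0 and ⟨A',A''⟩ = tr(A'A''). -/

import Mathlib

open Topology Filter Asymptotics Matrix

local notation "𝓛" => 𝓝[≠] (0:ℝ)

private lemma tendsto_punctured {f : ℝ → ℝ} (hf : Continuous f) :
    Tendsto f 𝓛 (𝓝 (f 0)) := (hf.tendsto 0).mono_left nhdsWithin_le_nhds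

private lemma bigO1_of_tendsto {f : ℝ → ℝ} {c : ℝ} (h : Tendsto f 𝓛 (𝓝 c)) :
    f =O[𝓛] (fun _ => (1:ℝ)) := h.isBigO_one ℝ

private lemma bigO1_of_continuous {f : ℝ → ℝ} (hf : Continuous f) :
    f =O[𝓛] (fun _ => (1:ℝ)) := bigO1_of_tendsto (tendsto_punctured hf)

private lemma r_bigO1 : (fun r : ℝ => r) =O[𝓛] (fun _ => (1:ℝ)) :=
  bigO1_of_continuous continuous_id

private lemma r_littleO1 : (fun r : ℝ => r) =o[𝓛] (fun _ => (1:ℝ)) :=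
  (isLittleO_one_iff ℝ).2 (by exact tendsto_punctured (f := fun r : ℝ => r) continuous_id)

private lemma r3_bigO1 : (fun r : ℝ => r^3) =O[𝓛] (fun _ => (1:ℝ)) :=
  bigO1_of_continuous (by continuity)

private lemma bigO1_const (c : ℝ) : (fun _ : ℝ => c) =O[𝓛] (fun _ => (1:ℝ)) :=
  bigO1_of_continuous continuous_const

private lemma bigO1_mul {f g : ℝ → ℝ} (hf : f =O[𝓛] (fun _ => (1:ℝ)))
    (hg : g =O[𝓛] (fun _ => (1:ℝ))) : (fun r => f r * g r) =O[𝓛] (fun _ => (1:ℝ)) := by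
  simpa using hf.mul hg

private lemma bigO1_add {f g : ℝ → ℝ} (hf : f =O[𝓛] (fun _ => (1:ℝ)))
    (hg : g =O[𝓛] (fun _ => (1:ℝ))) : (fun r => f r + g r) =O[𝓛] (fun _ => (1:ℝ)) :=
  hf.add hg

private lemma bigO1_sub {f g : ℝ → ℝ} (hf : f =O[𝓛] (fun _ => (1:ℝ)))
    (hg : g =O[𝓛] (fun _ => (1:ℝ))) : (fun r => f r - g r) =O[𝓛] (fun _ => (1:ℝ)) :=
  hf.sub hg

private lemma littleO_r4_mul {E : ℝ → ℝ} (hE : E =O[𝓛] (fun _ => (1:ℝ))) :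
    (fun r => r^4 * E r) =o[𝓛] (fun r => r^3) := by
  have h1 : (fun r : ℝ => r * E r) =o[𝓛] (fun _ => (1:ℝ)) := by
    simpa using r_littleO1.mul_isBigO hE
  have h2 : (fun r : ℝ => r^3 * (r * E r)) =o[𝓛] (fun r => r^3 * 1) :=
    (isBigO_refl (fun r : ℝ => r^3) 𝓛).mul_isLittleO h1
  refine (h2.congr' (Eventually.of_forall fun r => by ring) (Eventually.of_forall fun r => by ring))

private lemma prod_bigO1 {ι : Type*} (s : Finset ι) (f : ι → ℝ → ℝ)
    (hf : ∀ i ∈ s, f i =O[𝓛] (fun _ => (1:ℝ))) :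
    (fun r => ∏ i ∈ s, f i r) =O[𝓛] (fun _ => (1:ℝ)) := by
  classical
  induction s using Finset.induction_on with
  | empty => simpa using bigO1_const 1
  | @insert a s ha ih =>
    have := bigO1_mul (hf a (Finset.mem_insert_self a s))
      (ih fun i hi => hf i (Finset.mem_insert_of_mem hi))
    simpa [Finset.prod_insert ha] using this

private lemma prod_sub_littleO {ι : Type*} (s : Finset ι) (f g : ι → ℝ → ℝ)
    (hfg : ∀ i ∈ s, (fun r => f i r - g i r) =o[𝓛] (fun r => r^3))
    (hf : ∀ i ∈ s, f i =O[𝓛] (fun _ => (1:ℝ)))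
    (hg : ∀ i ∈ s, g i =O[𝓛] (fun _ => (1:ℝ))) :
    (fun r => (∏ i ∈ s, f i r) - ∏ i ∈ s, g i r) =o[𝓛] (fun r => r^3) := by
  classical
  induction s using Finset.induction_on with
  | empty => simpa using isLittleO_zero (fun r : ℝ => r^3) 𝓛
  | @insert a s ha ih =>
    have ihs := ih (fun i hi => hfg i (Finset.mem_insert_of_mem hi))
      (fun i hi => hf i (Finset.mem_insert_of_mem hi))
      (fun i hi => hg i (Finset.mem_insert_of_mem hi))
    have hPf : (fun r => ∏ i ∈ s, f i r) =O[𝓛] (fun _ => (1:ℝ)) :=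
      prod_bigO1 s f fun i hi => hf i (Finset.mem_insert_of_mem hi)
    have h1 : (fun r => (f a r - g a r) * ∏ i ∈ s, f i r) =o[𝓛] (fun r => r^3) := by
      simpa using (hfg a (Finset.mem_insert_self a s)).mul_isBigO hPf
    have h2 : (fun r => g a r * ((∏ i ∈ s, f i r) - ∏ i ∈ s, g i r)) =o[𝓛] (fun r => r^3) := by
      simpa using (hg a (Finset.mem_insert_self a s)).mul_isLittleO ihs
    refine (h1.add h2).congr' (Eventually.of_forall fun r => ?_) EventuallyEq.rfl
    simp only [Finset.prod_insert ha]; ring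

private lemma one_add_prod_expansion {ι : Type*} (s : Finset ι) (μ : ι → ℝ → ℝ)
    (hμ : ∀ i ∈ s, μ i =O[𝓛] (fun _ => (1:ℝ))) :
    (fun r => (∏ i ∈ s, (1 + r * μ i r)) -
      (1 + (∑ i ∈ s, μ i r) * r + ((∑ i ∈ s, μ i r)^2 - ∑ i ∈ s, (μ i r)^2)/2 * r^2 +
        ((∑ i ∈ s, μ i r)^3 - 3*(∑ i ∈ s, μ i r)*(∑ i ∈ s, (μ i r)^2)
          + 2*(∑ i ∈ s, (μ i r)^3))/6 * r^3))
      =o[𝓛] (fun r => r^3) := by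
  classical
  induction s using Finset.induction_on with
  | empty => simp
  | @insert a s ha ih =>
    have hμa := hμ a (Finset.mem_insert_self a s)
    have hμs : ∀ i ∈ s, μ i =O[𝓛] (fun _ => (1:ℝ)) :=
      fun i hi => hμ i (Finset.mem_insert_of_mem hi)
    have ihs := ih hμs
    have hS1 : (fun r => ∑ i ∈ s, μ i r) =O[𝓛] (fun _ => (1:ℝ)) := IsBigO.fun_sum hμs
    have hS2 : (fun r => ∑ i ∈ s, (μ i r)^2) =O[𝓛] (fun _ => (1:ℝ)) :=
      IsBigO.fun_sum fun i hi => by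
        simpa [pow_two] using bigO1_mul (hμs i hi) (hμs i hi)
    have hS3 : (fun r => ∑ i ∈ s, (μ i r)^3) =O[𝓛] (fun _ => (1:ℝ)) :=
      IsBigO.fun_sum fun i hi => by
        simpa [pow_succ, pow_zero, one_mul] using
          bigO1_mul (bigO1_mul (hμs i hi) (hμs i hi)) (hμs i hi)
    -- E is O(1)
    have hE : (fun r => (1/6 : ℝ) * (μ a r * ((∑ i ∈ s, μ i r)^3
        - 3*(∑ i ∈ s, μ i r)*(∑ i ∈ s, (μ i r)^2) + 2*(∑ i ∈ s, (μ i r)^3))))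
        =O[𝓛] (fun _ => (1:ℝ)) := by
      refine bigO1_mul (bigO1_const _) (bigO1_mul hμa ?_)
      refine bigO1_add (bigO1_sub ?_ ?_) ?_
      · simpa [pow_succ, pow_zero, one_mul] using bigO1_mul (bigO1_mul hS1 hS1) hS1
      · exact bigO1_mul (bigO1_mul (bigO1_const 3) hS1) hS2
      · exact bigO1_mul (bigO1_const 2) hS3
    have h1 : (fun r => (1 + r * μ a r) * ((∏ i ∈ s, (1 + r * μ i r)) -
        (1 + (∑ i ∈ s, μ i r) * r + ((∑ i ∈ s, μ i r)^2 - ∑ i ∈ s, (μ i r)^2)/2 * r^2 +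
        ((∑ i ∈ s, μ i r)^3 - 3*(∑ i ∈ s, μ i r)*(∑ i ∈ s, (μ i r)^2)
          + 2*(∑ i ∈ s, (μ i r)^3))/6 * r^3))) =o[𝓛] (fun r => r^3) := by
      have hb : (fun r => 1 + r * μ a r) =O[𝓛] (fun _ => (1:ℝ)) :=
        bigO1_add (bigO1_const 1) (bigO1_mul r_bigO1 hμa)
      simpa using hb.mul_isLittleO ihs
    have h2 := littleO_r4_mul hE
    refine (h1.add h2).congr' (Eventually.of_forall fun r => ?_) EventuallyEq.rfl
    simp only [Finset.prod_insert ha, Finset.sum_insert ha]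
    ring

private lemma conj_pow_eq {d : ℕ} {B : Matrix (Fin d) (Fin d) ℝ} (hB : B.IsHermitian) (k : ℕ) :
    B ^ k = (hB.eigenvectorUnitary : Matrix (Fin d) (Fin d) ℝ) *
      (Matrix.diagonal ((RCLike.ofReal ∘ hB.eigenvalues : Fin d → ℝ))) ^ k *
      star (hB.eigenvectorUnitary : Matrix (Fin d) (Fin d) ℝ) := by
  set U := (hB.eigenvectorUnitary : Matrix (Fin d) (Fin d) ℝ) with hU
  set D := Matrix.diagonal ((RCLike.ofReal ∘ hB.eigenvalues : Fin d → ℝ)) with hD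
  have hU1 : U * star U = 1 := Matrix.mem_unitaryGroup_iff.mp hB.eigenvectorUnitary.2
  have hU2 : star U * U = 1 := Matrix.mem_unitaryGroup_iff'.mp hB.eigenvectorUnitary.2
  have hBU : B = U * D * star U := hB.spectral_theorem
  induction k with
  | zero => simpa [pow_zero] using hU1.symm
  | succ n ihn =>
    rw [pow_succ, ihn]
    conv_lhs => rw [hBU]
    simp only [Matrix.mul_assoc]
    rw [← Matrix.mul_assoc (star U) U, hU2, Matrix.one_mul]
    simp only [← Matrix.mul_assoc, pow_succ]

private lemma trace_pow_eq {d : ℕ} {B : Matrix (Fin d) (Fin d) ℝ} (hB : B.IsHermitian) (k : ℕ) :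
    (B ^ k).trace = ∑ i, hB.eigenvalues i ^ k := by
  have hU2 : star (hB.eigenvectorUnitary : Matrix (Fin d) (Fin d) ℝ) *
      (hB.eigenvectorUnitary : Matrix (Fin d) (Fin d) ℝ) = 1 :=
    Matrix.mem_unitaryGroup_iff'.mp hB.eigenvectorUnitary.2
  rw [conj_pow_eq hB k, Matrix.trace_mul_cycle, hU2, Matrix.one_mul, Matrix.diagonal_pow,
    Matrix.trace_diagonal]
  simp [RCLike.ofReal_real_eq_id]

private lemma det_one_add_smul_eigen {d : ℕ} {B : Matrix (Fin d) (Fin d) ℝ}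
    (hB : B.IsHermitian) (t : ℝ) :
    ((1 : Matrix (Fin d) (Fin d) ℝ) + t • B).det = ∏ i, (1 + t * hB.eigenvalues i) := by
  set U := (hB.eigenvectorUnitary : Matrix (Fin d) (Fin d) ℝ) with hU
  set D := Matrix.diagonal ((RCLike.ofReal ∘ hB.eigenvalues : Fin d → ℝ)) with hD
  have hU1 : U * star U = 1 := Matrix.mem_unitaryGroup_iff.mp hB.eigenvectorUnitary.2
  have hU2 : star U * U = 1 := Matrix.mem_unitaryGroup_iff'.mp hB.eigenvectorUnitary.2
  have hBU : B = U * D * star U := hB.spectral_theorem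
  have hd : Matrix.diagonal (fun i => 1 + t * hB.eigenvalues i) = 1 + t • D := by
    have : D = Matrix.diagonal hB.eigenvalues := by
      rw [hD]; simp [RCLike.ofReal_real_eq_id]
    rw [this, ← Matrix.diagonal_one, ← Matrix.diagonal_smul, ← Matrix.diagonal_add]
    rfl
  have key : (1 : Matrix (Fin d) (Fin d) ℝ) + t • B =
      U * Matrix.diagonal (fun i => 1 + t * hB.eigenvalues i) * star U := by
    rw [hd, hBU]
    rw [Matrix.mul_add, Matrix.add_mul, Matrix.mul_one, hU1, Matrix.mul_smul,
      Matrix.smul_mul]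
  rw [key, Matrix.det_mul, Matrix.det_mul, Matrix.det_diagonal]
  have h1 : U.det * (star U).det = 1 := by rw [← Matrix.det_mul, hU1, Matrix.det_one]
  calc (U.det * ∏ i, (1 + t * hB.eigenvalues i)) * (star U).det
      = (∏ i, (1 + t * hB.eigenvalues i)) * (U.det * (star U).det) := by ring
    _ = _ := by rw [h1, mul_one]


set_option maxHeartbeats 1000000 in
/-- For a curve of symmetric positive-definite matrices
`A r = Id + r A' + (r²/2) A'' + (r³/6) A''' + o(r³)`, the third-order coefficient of
`√(det A r)` is `D₃ = (1/12)[tr A''' - 3⟨A',A''⟩ + 2 tr((A')³) + (3/2)(tr A')(tr A'')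
- (3/2)(tr A') tr((A')²) + (1/4)(tr A')³]`. -/
theorem stmt6 {d : ℕ} (A : ℝ → Matrix (Fin d) (Fin d) ℝ)
    (A1 A2 A3 : Matrix (Fin d) (Fin d) ℝ)
    (hs : ∀ r, (A r).IsSymm) (hpos : ∀ r, (A r).PosDef)
    (hs1 : A1.IsSymm) (hs2 : A2.IsSymm) (hs3 : A3.IsSymm)
    (hexp : ∀ i j, Filter.Tendsto
      (fun r : ℝ => ((A r - ((1 : Matrix (Fin d) (Fin d) ℝ) + r • A1 + (r^2/2) • A2
          + (r^3/6) • A3)) i j) / r^3)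
      (𝓝[≠] (0:ℝ)) (𝓝 0)) :
    Filter.Tendsto
      (fun r : ℝ => (Real.sqrt (A r).det -
        (1 + (A1.trace / 2) * r +
          ((A2.trace - (A1 * A1).trace + (A1.trace)^2 / 2) / 4) * r^2 +
          ((A3.trace - 3 * (A1 * A2).trace + 2 * (A1 * A1 * A1).trace
            + (3/2) * A1.trace * A2.trace - (3/2) * A1.trace * (A1 * A1).trace
            + (1/4) * (A1.trace)^3) / 12) * r^3)) / r^3)
      (𝓝[≠] (0:ℝ)) (𝓝 0) := by
  classical
  set a := A1.trace with ha
  set b := A2.trace with hb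
  set c := A3.trace with hc
  set τ := (A1 * A2).trace with hτ
  set a2 := (A1 * A1).trace with ha2
  set a3 := (A1 * A1 * A1).trace with ha3
  set sfun : ℝ → ℝ := fun r => 1 + a / 2 * r + (b - a2 + a ^ 2 / 2) / 4 * r ^ 2 +
    (c - 3 * τ + 2 * a3 + 3 / 2 * a * b - 3 / 2 * a * a2 + 1 / 4 * a ^ 3) / 12 * r ^ 3
    with hsfun
  set cub : ℝ → ℝ := fun r => 1 + a * r + (b / 2 + (a ^ 2 - a2) / 2) * r ^ 2 +
    (c / 6 + (a * b - τ) / 2 + (a ^ 3 - 3 * a * a2 + 2 * a3) / 6) * r ^ 3 with hcub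
  set Pm : ℝ → Matrix (Fin d) (Fin d) ℝ := fun r =>
    (1 : Matrix (Fin d) (Fin d) ℝ) + r • A1 + (r ^ 2 / 2) • A2 + (r ^ 3 / 6) • A3 with hPm
  set X : ℝ → Matrix (Fin d) (Fin d) ℝ := fun r =>
    A1 + (r / 2) • A2 + (r ^ 2 / 6) • A3 with hX
  set Y : ℝ → Matrix (Fin d) (Fin d) ℝ := fun r =>
    (1 / 2 : ℝ) • A2 + (r / 6) • A3 with hY
  have hXh : ∀ r, (X r).IsHermitian := by
    intro r
    rw [Matrix.IsHermitian, Matrix.conjTranspose_eq_transpose_of_trivial]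
    exact (hs1.add (hs2.smul (r / 2))).add (hs3.smul (r ^ 2 / 6))
  set lam : Fin d → ℝ → ℝ := fun i r => (hXh r).eigenvalues i with hlam
  set t1 : ℝ → ℝ := fun r => (X r).trace with ht1d
  set t2 : ℝ → ℝ := fun r => (X r * X r).trace with ht2d
  set t3 : ℝ → ℝ := fun r => (X r * X r * X r).trace with ht3d
  have hsum1 : ∀ r, (∑ i, lam i r) = t1 r := by
    intro r
    simp only [hlam, ht1d]
    simpa using (trace_pow_eq (hXh r) 1).symm
  have hsum2 : ∀ r, (∑ i, (lam i r) ^ 2) = t2 r := by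
    intro r
    simp only [hlam, ht2d]
    simpa [pow_two] using (trace_pow_eq (hXh r) 2).symm
  have hsum3 : ∀ r, (∑ i, (lam i r) ^ 3) = t3 r := by
    intro r
    simp only [hlam, ht3d]
    simpa [pow_succ, pow_zero, one_mul] using (trace_pow_eq (hXh r) 3).symm
  -- continuity facts
  have hYcont : Continuous Y := by
    rw [hY]
    exact continuous_const.add ((continuous_id.div_const 6).smul continuous_const)
  have hXcont : Continuous X := by
    rw [hX]
    exact (continuous_const.add ((continuous_id.div_const 2).smul continuous_const)).add
      (((continuous_pow 2).div_const 6).smul continuous_const)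
  have hPmcont : Continuous Pm := by
    rw [hPm]
    exact ((continuous_const.add (continuous_id.smul continuous_const)).add
      (((continuous_pow 2).div_const 2).smul continuous_const)).add
      (((continuous_pow 3).div_const 6).smul continuous_const)
  have ht1cont : Continuous t1 := by rw [ht1d]; exact hXcont.matrix_trace
  have ht2cont : Continuous t2 := by rw [ht2d]; exact (hXcont.matrix_mul hXcont).matrix_trace
  -- algebraic normal forms
  have hXY : ∀ r, X r = A1 + r • Y r := by
    intro r
    simp only [hX, hY, smul_add, smul_smul]
    rw [show r * (1/2 : ℝ) = r/2 by ring, show r * (r/6 : ℝ) = r^2/6 by ring, add_assoc]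
  have hPX : ∀ r, Pm r = 1 + r • X r := by
    intro r
    simp only [hPm, hX, smul_add, smul_smul]
    rw [show r * (r/2 : ℝ) = r^2/2 by ring, show r * (r^2/6 : ℝ) = r^3/6 by ring,
      add_assoc, add_assoc, ← add_assoc (r • A1) ((r^2/2) • A2) ((r^3/6) • A3)]
  set w2 : ℝ → ℝ := fun r => (A1 * A3).trace / 3 + (Y r * Y r).trace with hw2
  set w3 : ℝ → ℝ := fun r => 3 * (A1 * A1 * Y r).trace + 3 * r * (A1 * (Y r * Y r)).trace
    + r ^ 2 * (Y r * Y r * Y r).trace with hw3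
  have hw2cont : Continuous w2 := by
    rw [hw2]
    exact continuous_const.add (hYcont.matrix_mul hYcont).matrix_trace
  have hw3cont : Continuous w3 := by
    rw [hw3]
    refine Continuous.add (Continuous.add ?_ ?_) ?_
    · exact continuous_const.mul (continuous_const.matrix_mul hYcont).matrix_trace
    · exact (continuous_const.mul continuous_id).mul
        (continuous_const.matrix_mul (hYcont.matrix_mul hYcont)).matrix_trace
    · exact (continuous_pow 2).mul
        ((hYcont.matrix_mul hYcont).matrix_mul hYcont).matrix_trace
  have ht1 : ∀ r, t1 r = a + b / 2 * r + c / 6 * r ^ 2 := by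
    intro r
    simp only [ht1d, hX, Matrix.trace_add, Matrix.trace_smul, smul_eq_mul]
    rw [← ha, ← hb, ← hc]; ring
  have htrAY : ∀ r, (A1 * Y r).trace = τ / 2 + r / 6 * (A1 * A3).trace := by
    intro r
    simp only [hY, Matrix.mul_add, mul_smul_comm, Matrix.trace_add, Matrix.trace_smul,
      smul_eq_mul]
    rw [← hτ]; ring
  have ht2 : ∀ r, t2 r = a2 + τ * r + r ^ 2 * w2 r := by
    intro r
    simp only [ht2d, hw2]
    rw [hXY r]
    simp only [Matrix.add_mul, Matrix.mul_add, smul_mul_assoc, mul_smul_comm, smul_smul,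
      Matrix.trace_add, Matrix.trace_smul, smul_eq_mul]
    rw [Matrix.trace_mul_comm (Y r) A1, htrAY r, ← ha2]
    ring
  have ht3 : ∀ r, t3 r = a3 + r * w3 r := by
    intro r
    simp only [ht3d, hw3]
    rw [hXY r]
    simp only [Matrix.add_mul, Matrix.mul_add, smul_mul_assoc, mul_smul_comm, smul_smul,
      Matrix.trace_add, Matrix.trace_smul, smul_eq_mul]
    rw [Matrix.trace_mul_cycle (Y r) A1 A1, Matrix.trace_mul_cycle A1 (Y r) A1,
      Matrix.trace_mul_cycle (Y r) A1 (Y r), Matrix.trace_mul_comm (Y r * Y r) A1,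
      mul_assoc A1 (Y r) (Y r), ← ha3]
    ring
  -- eigenvalue bound
  have ht2lim : Tendsto t2 𝓛 (𝓝 (t2 0)) := tendsto_punctured ht2cont
  have hbound : ∀ᶠ r in 𝓛, t2 r ≤ t2 0 + 1 :=
    ht2lim.eventually (eventually_le_nhds (lt_add_one _))
  have hμO : ∀ i, lam i =O[𝓛] (fun _ => (1:ℝ)) := by
    intro i
    refine IsBigO.of_bound (Real.sqrt (t2 0 + 1)) ?_
    filter_upwards [hbound] with r hr
    rw [Real.norm_eq_abs, norm_one, mul_one]
    have h1 : (lam i r) ^ 2 ≤ t2 r := by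
      rw [← hsum2 r]
      exact Finset.single_le_sum (f := fun j => (lam j r) ^ 2) (fun j _ => sq_nonneg _)
        (Finset.mem_univ i)
    calc |lam i r| = Real.sqrt ((lam i r) ^ 2) := (Real.sqrt_sq_eq_abs _).symm
      _ ≤ Real.sqrt (t2 0 + 1) := Real.sqrt_le_sqrt (h1.trans hr)
  have hdetP : ∀ r, (Pm r).det = ∏ i, (1 + r * lam i r) := by
    intro r
    rw [hPX r]
    simpa only [hlam] using det_one_add_smul_eigen (hXh r) r
  have hprod := one_add_prod_expansion Finset.univ lam (fun i _ => hμO i)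
  have hP2 : (fun r => (Pm r).det - (1 + t1 r * r + ((t1 r) ^ 2 - t2 r) / 2 * r ^ 2 +
      ((t1 r) ^ 3 - 3 * t1 r * t2 r + 2 * t3 r) / 6 * r ^ 3)) =o[𝓛] (fun r => r ^ 3) := by
    refine hprod.congr' (Eventually.of_forall fun r => ?_) EventuallyEq.rfl
    beta_reduce
    rw [hdetP r, hsum1 r, hsum2 r, hsum3 r]
  set G : ℝ → ℝ := fun r => (b ^ 2 / 4 + a * c / 3 - w2 r + b * c / 6 * r
      + c ^ 2 / 36 * r ^ 2) / 2
    + ((b / 2 + c * r / 6) * ((t1 r) ^ 2 + a * t1 r + a ^ 2)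
      - 3 * ((b / 2 + c * r / 6) * t2 r + a * (τ + r * w2 r)) + 2 * w3 r) / 6 with hG
  have hQG : ∀ r, (1 + t1 r * r + ((t1 r) ^ 2 - t2 r) / 2 * r ^ 2 +
      ((t1 r) ^ 3 - 3 * t1 r * t2 r + 2 * t3 r) / 6 * r ^ 3) - cub r = r ^ 4 * G r := by
    intro r
    simp only [hG, hcub]
    rw [ht1 r, ht2 r, ht3 r]
    ring
  have hGcont : Continuous G := by
    rw [hG]
    have hc0 : Continuous fun r : ℝ => b / 2 + c * r / 6 :=
      continuous_const.add ((continuous_const.mul continuous_id).div_const 6)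
    refine Continuous.add (Continuous.div_const ?_ 2) (Continuous.div_const ?_ 6)
    · exact (((continuous_const.sub hw2cont).add (continuous_const.mul continuous_id)).add
        (continuous_const.mul (continuous_pow 2)))
    · refine Continuous.add (Continuous.sub ?_ ?_) ?_
      · exact hc0.mul (((ht1cont.pow 2).add (continuous_const.mul ht1cont)).add
          continuous_const)
      · exact continuous_const.mul ((hc0.mul ht2cont).add
          (continuous_const.mul (continuous_const.add (continuous_id.mul hw2cont))))
      · exact continuous_const.mul hw3cont
  have hGO : G =O[𝓛] (fun _ => (1:ℝ)) := bigO1_of_continuous hGcont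
  have hQc : (fun r => (1 + t1 r * r + ((t1 r) ^ 2 - t2 r) / 2 * r ^ 2 +
      ((t1 r) ^ 3 - 3 * t1 r * t2 r + 2 * t3 r) / 6 * r ^ 3) - cub r) =o[𝓛]
      (fun r => r ^ 3) := by
    refine (littleO_r4_mul hGO).congr' (Eventually.of_forall fun r => (hQG r).symm)
      EventuallyEq.rfl
  -- step 1 : entrywise comparison
  have hEntry : ∀ i j, (fun r => A r i j - Pm r i j) =o[𝓛] (fun r => r ^ 3) := by
    intro i j
    have hne : ∀ᶠ r : ℝ in 𝓛, r ^ 3 = 0 → A r i j - Pm r i j = 0 := by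
      filter_upwards [self_mem_nhdsWithin] with r hr h3
      simp only [Set.mem_compl_iff, Set.mem_singleton_iff] at hr
      exact absurd (pow_eq_zero_iff (by norm_num : (3:ℕ) ≠ 0) |>.mp h3) hr
    refine (isLittleO_iff_tendsto' hne).mpr ?_
    simpa only [hPm, Matrix.sub_apply] using hexp i j
  have hPmEntryO : ∀ i j, (fun r => Pm r i j) =O[𝓛] (fun _ => (1:ℝ)) := by
    intro i j
    exact bigO1_of_continuous (hPmcont.matrix_elem i j)
  have hAEntryO : ∀ i j, (fun r => A r i j) =O[𝓛] (fun _ => (1:ℝ)) := by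
    intro i j
    have h1 := ((hEntry i j).isBigO.trans r3_bigO1)
    have h2 := bigO1_add h1 (hPmEntryO i j)
    simpa using h2
  have hdet1 : (fun r => (A r).det - (Pm r).det) =o[𝓛] (fun r => r ^ 3) := by
    have hsum : (fun r : ℝ => ∑ σ : Equiv.Perm (Fin d),
        ((Equiv.Perm.sign σ : ℤ) : ℝ) * ((∏ i, A r (σ i) i) - ∏ i, Pm r (σ i) i))
        =o[𝓛] (fun r => r ^ 3) := by
      refine IsLittleO.fun_sum fun σ _ => IsLittleO.const_mul_left ?_ _
      exact prod_sub_littleO Finset.univ (fun i r => A r (σ i) i) (fun i r => Pm r (σ i) i)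
        (fun i _ => hEntry (σ i) i) (fun i _ => hAEntryO (σ i) i)
        (fun i _ => hPmEntryO (σ i) i)
    refine hsum.congr' (Eventually.of_forall fun r => ?_) EventuallyEq.rfl
    beta_reduce
    rw [Matrix.det_apply', Matrix.det_apply', ← Finset.sum_sub_distrib]
    exact Finset.sum_congr rfl fun σ _ => mul_sub _ _ _
  have hdet : (fun r => (A r).det - cub r) =o[𝓛] (fun r => r ^ 3) := by
    refine ((hdet1.add hP2).add hQc).congr' (Eventually.of_forall fun r => by ring)
      EventuallyEq.rfl
  -- sqrt part
  have hcubcont : Continuous cub := by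
    rw [hcub]
    exact ((continuous_const.add (continuous_const.mul continuous_id)).add
      (continuous_const.mul (continuous_pow 2))).add (continuous_const.mul (continuous_pow 3))
  have hcubT : Tendsto cub 𝓛 (𝓝 1) := by
    have h0 : cub 0 = 1 := by simp [hcub]
    have := tendsto_punctured hcubcont
    rwa [h0] at this
  have hscont : Continuous sfun := by
    rw [hsfun]
    exact ((continuous_const.add (continuous_const.mul continuous_id)).add
      (continuous_const.mul (continuous_pow 2))).add (continuous_const.mul (continuous_pow 3))
  have hsT : Tendsto sfun 𝓛 (𝓝 1) := by
    have h0 : sfun 0 = 1 := by simp [hsfun]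
    have := tendsto_punctured hscont
    rwa [h0] at this
  have hdetT : Tendsto (fun r => (A r).det) 𝓛 (𝓝 1) := by
    have h1 : Tendsto (fun r => (A r).det - cub r) 𝓛 (𝓝 0) :=
      (isLittleO_one_iff ℝ).1 (hdet.trans_isBigO r3_bigO1)
    have := h1.add hcubT
    simpa using this
  have hsqT : Tendsto (fun r => Real.sqrt ((A r).det)) 𝓛 (𝓝 1) := by
    have := (Real.continuous_sqrt.tendsto 1).comp hdetT
    simpa [Function.comp_def] using this
  set den : ℝ → ℝ := fun r => Real.sqrt ((A r).det) + sfun r with hdend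
  have hdenT : Tendsto den 𝓛 (𝓝 2) := by
    have := hsqT.add hsT
    norm_num at this
    exact this
  have hdenpos : ∀ᶠ r in 𝓛, 0 < den r :=
    hdenT.eventually (eventually_gt_nhds (by norm_num))
  have hinvO : (fun r => (den r)⁻¹) =O[𝓛] (fun _ => (1:ℝ)) :=
    bigO1_of_tendsto (hdenT.inv₀ (by norm_num))
  set K : ℝ → ℝ := fun r =>
    -((2 * (a / 2) * ((c - 3 * τ + 2 * a3 + 3 / 2 * a * b - 3 / 2 * a * a2 + 1 / 4 * a ^ 3) / 12)
        + ((b - a2 + a ^ 2 / 2) / 4) ^ 2)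
      + 2 * ((b - a2 + a ^ 2 / 2) / 4) *
        ((c - 3 * τ + 2 * a3 + 3 / 2 * a * b - 3 / 2 * a * a2 + 1 / 4 * a ^ 3) / 12) * r
      + ((c - 3 * τ + 2 * a3 + 3 / 2 * a * b - 3 / 2 * a * a2 + 1 / 4 * a ^ 3) / 12) ^ 2 * r ^ 2)
    with hKd
  have hK : ∀ r, cub r - (sfun r) ^ 2 = r ^ 4 * K r := by
    intro r
    simp only [hcub, hsfun, hKd]
    ring
  have hKO : K =O[𝓛] (fun _ => (1:ℝ)) := by
    refine bigO1_of_continuous ?_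
    rw [hKd]
    exact (((continuous_const.add (continuous_const.mul continuous_id)).add
      (continuous_const.mul (continuous_pow 2)))).neg
  have hnum : (fun r => (A r).det - (sfun r) ^ 2) =o[𝓛] (fun r => r ^ 3) := by
    refine (hdet.add (littleO_r4_mul hKO)).congr'
      (Eventually.of_forall fun r => ?_) EventuallyEq.rfl
    beta_reduce
    rw [← hK r]; ring
  have hg : (fun r => ((A r).det - (sfun r) ^ 2) * (den r)⁻¹) =o[𝓛] (fun r => r ^ 3) := by
    simpa using hnum.mul_isBigO hinvO
  have heq : (fun r => Real.sqrt ((A r).det) - sfun r) =ᶠ[𝓛]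
      (fun r => ((A r).det - (sfun r) ^ 2) * (den r)⁻¹) := by
    filter_upwards [hdenpos] with r hr
    have hd0 : den r ≠ 0 := ne_of_gt hr
    have hsq : Real.sqrt ((A r).det) ^ 2 = (A r).det := Real.sq_sqrt (hpos r).det_pos.le
    have hmul : (Real.sqrt ((A r).det) - sfun r) * den r = (A r).det - (sfun r) ^ 2 := by
      have h2 : (Real.sqrt ((A r).det) - sfun r) * (Real.sqrt ((A r).det) + sfun r)
          = Real.sqrt ((A r).det) ^ 2 - (sfun r) ^ 2 := by ring
      simp only [hdend]
      rw [h2, hsq]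
    rw [← hmul, mul_inv_cancel_right₀ hd0]
  have hfinal : (fun r => Real.sqrt ((A r).det) - sfun r) =o[𝓛] (fun r => r ^ 3) :=
    hg.congr' heq.symm EventuallyEq.rfl
  have hconc := hfinal.tendsto_div_nhds_zero
  simpa only [hsfun] using hconc
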